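/- Let 1 → N → G → Q → 1 be a short exact sequence of groups. If N is Jordan and Q is finite, then G is Jordan. -/

import Mathlib

/-- A group `G` is Jordan with constant `J` if every finite subgroup of `G`
contains a normal abelian subgroup of index at most `J`. -/
def IsJordanWith (J : ℕ) (G : Type*) [Group G] : Prop :=
  ∀ H : Subgroup G, Finite H →
    ∃ A : Subgroup H, A.Normal ∧ (∀ a b : A, a * b = b * a) ∧ A.index ≤ J

/-- A group is Jordan if it is Jordan with some positive constant. -/
def IsJordanGroup (G : Type*) [Group G] : Prop := ∃ J : ℕ, 0 < J ∧ IsJordanWith J G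

/-- Let `1 → N → G → Q → 1` be a short exact sequence of groups. If `N` is Jordan and
`Q` is finite, then `G` is Jordan. -/
theorem isJordan_of_shortExact {N G Q : Type*} [Group N] [Group G] [Group Q]
    (f : N →* G) (g : G →* Q) (hf : Function.Injective f) (hg : Function.Surjective g)
    (hexact : f.range = g.ker) (hN : IsJordanGroup N) (hQ : Finite Q) :
    IsJordanGroup G := by
  obtain ⟨J, hJpos, hJ⟩ := hN
  set q := Nat.card Q with hqdef
  have hq : 0 < q := Nat.card_pos
  refine ⟨(J * q) ^ q, pow_pos (Nat.mul_pos hJpos hq) q, ?_⟩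
  intro H hHfin
  -- the map from `H` to `Q` and its kernel `L`
  set ψ : H →* Q := g.comp H.subtype with hψdef
  set L : Subgroup H := ψ.ker with hLdef
  have hLindex : L.index ≤ q := by
    rw [Subgroup.index_ker]
    exact Nat.card_le_card_of_injective _ ψ.range.subtype_injective
  -- the preimage of `H` in `N`
  set N' : Subgroup N := H.comap f with hN'def
  have hN'fin : Finite N' :=
    Finite.of_injective (fun x => (⟨f x, x.2⟩ : H))
      (fun a b hab => Subtype.ext (hf (congrArg Subtype.val hab)))
  obtain ⟨A', hA'norm, hA'comm, hA'idx⟩ := hJ N' hN'fin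
  -- the embedding of `N'` into `H`, with range `L`
  set φ : N' →* H :=
    { toFun := fun x => ⟨f x, x.2⟩
      map_one' := by ext; simp
      map_mul' := fun a b => by ext; simp } with hφdef
  have hφinj : Function.Injective φ :=
    fun a b hab => Subtype.ext (hf (congrArg Subtype.val hab))
  have hφrange : φ.range = L := by
    ext x
    constructor
    · rintro ⟨n, rfl⟩
      have : f n ∈ g.ker := hexact ▸ ⟨n, rfl⟩
      exact this
    · intro hx
      have : (x : G) ∈ f.range := by
        rw [hexact]
        simpa [hLdef, hψdef, MonoidHom.mem_ker] using hx
      obtain ⟨n, hn⟩ := this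
      have hnN' : n ∈ N' := by simp [hN'def, hn]
      exact ⟨⟨n, hnN'⟩, Subtype.ext hn⟩
  -- the abelian subgroup `A` of `H`
  set A : Subgroup H := A'.map φ with hAdef
  have hAL : A ≤ L := by
    rintro x ⟨a, _, rfl⟩
    rw [← hφrange]
    exact ⟨a, rfl⟩
  have hAcomm : ∀ x ∈ A, ∀ y ∈ A, x * y = y * x := by
    rintro x ⟨a, ha, rfl⟩ y ⟨b, hb, rfl⟩
    have := congrArg Subtype.val (hA'comm ⟨a, ha⟩ ⟨b, hb⟩)
    have hab : a * b = b * a := this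
    rw [← map_mul, ← map_mul, hab]
  have hALnorm : ∀ l ∈ L, ∀ x ∈ A, l * x * l⁻¹ ∈ A := by
    intro l hl x hx
    rw [← hφrange] at hl
    obtain ⟨m, rfl⟩ := hl
    obtain ⟨a, ha, rfl⟩ := hx
    refine ⟨m * a * m⁻¹, hA'norm.conj_mem a ha m, by simp [map_mul]⟩
  have hAidx : A.index ≤ J * q := by
    have h1 : A.index = A'.index * φ.range.index :=
      Subgroup.index_map_of_injective A' hφinj
    rw [h1, hφrange]
    exact Nat.mul_le_mul hA'idx hLindex
  -- the conjugates of `A`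
  set C : H → Subgroup H := fun h => A.map (MulAut.conj h).toMonoidHom with hCdef
  have hCmem : ∀ (h x : H), x ∈ C h ↔ h⁻¹ * x * h ∈ A := by
    intro h x
    simp only [hCdef, Subgroup.mem_map, MulEquiv.coe_toMonoidHom, MulAut.conj_apply]
    constructor
    · rintro ⟨a, ha, rfl⟩
      simpa [mul_assoc] using ha
    · intro hx
      exact ⟨h⁻¹ * x * h, hx, by group⟩
  have hCidx : ∀ h : H, (C h).index = A.index := by
    intro h
    show (A.map (MulAut.conj h).toMonoidHom).index = A.index
    refine Subgroup.index_map_eq (H := A) (f := (MulAut.conj h).toMonoidHom) ?_ ?_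
    · exact fun y => ⟨(MulAut.conj h).symm y, (MulAut.conj h).apply_symm_apply y⟩
    · intro x hx
      have h1 : (MulAut.conj h).toMonoidHom x = 1 := hx
      have h2 : x = 1 := (MulAut.conj h).injective (by simpa using h1)
      rw [h2]; exact A.one_mem
  have hCcoset : ∀ (h l : H), l ∈ L → C (h * l) = C h := by
    intro h l hl
    ext x
    rw [hCmem, hCmem]
    constructor
    · intro hx
      have := hALnorm l hl _ hx
      simpa [mul_assoc] using this
    · intro hx
      have := hALnorm l⁻¹ (inv_mem hl) _ hx
      simpa [mul_assoc] using this
  -- the intersection of the conjugates of `A`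
  set B : Subgroup H := ⨅ h : H, C h with hBdef
  have hC1 : C 1 = A := by
    ext x
    rw [hCmem]
    simp
  have hBA : B ≤ A := le_trans (iInf_le C 1) (le_of_eq hC1)
  have hBmem : ∀ x : H, x ∈ B ↔ ∀ h : H, x ∈ C h := fun x => Subgroup.mem_iInf
  refine ⟨B, ?_, ?_, ?_⟩
  · -- normality
    constructor
    intro b hb h
    rw [hBmem]
    intro h'
    rw [hCmem]
    have := (hCmem (h⁻¹ * h') b).mp ((hBmem b).mp hb (h⁻¹ * h'))
    simpa [mul_assoc] using this
  · -- commutativity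
    intro a b
    exact Subtype.ext (hAcomm a (hBA a.2) b (hBA b.2))
  · -- index bound
    have hBeq : B = ⨅ c : H ⧸ L, C (Quotient.out c) := by
      refine le_antisymm (le_iInf fun c => iInf_le C _) (le_iInf fun h => ?_)
      obtain ⟨l, hl⟩ := QuotientGroup.mk_out_eq_mul L h
      have h1 : C (Quotient.out (QuotientGroup.mk h : H ⧸ L)) = C h := by
        rw [hl]
        exact hCcoset h l l.2
      exact le_trans (iInf_le _ (QuotientGroup.mk h)) (le_of_eq h1)
    haveI : Fintype (H ⧸ L) := Fintype.ofFinite _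
    have hcard : Fintype.card (H ⧸ L) ≤ q := by
      rw [← Nat.card_eq_fintype_card]
      exact hLindex
    calc B.index ≤ ∏ c : H ⧸ L, (C (Quotient.out c)).index := by
          rw [hBeq]; exact Subgroup.index_iInf_le _
      _ = A.index ^ Fintype.card (H ⧸ L) := by
          simp [hCidx, Finset.prod_const, Finset.card_univ]
      _ ≤ (J * q) ^ Fintype.card (H ⧸ L) := Nat.pow_le_pow_left hAidx _
      _ ≤ (J * q) ^ q := Nat.pow_le_pow_right (Nat.mul_pos hJpos hq) hcard
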